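/- Let c_p, c_h ∈ ℝ, let d ∈ ℝ, let f : ℝ^n → ℝ be differentiable at a point w₀ ∈ ℝ^n, and define the quadratic newsvendor training loss E : ℝ^n → ℝ by E(w) = (1/2)·(c_p · (d − f(w))^+)² + (1/2)·(c_h · (f(w) − d)^+)², where (a)^+ = max{a, 0}. Then E is differentiable at w₀ (including when f(w₀) = d), and its gradient at w₀ equals −c_p² · (d − f(w₀)) · ∇f(w₀) if f(w₀) < d, equals c_h² · (f(w₀) − d) · ∇f(w₀) if f(w₀) > d, and equals 0 if f(w₀) = d. -/

import Mathlib

open Asymptotics Filter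

lemma sq_max_hasDerivAt (a : ℝ) :
    HasDerivAt (fun y : ℝ => (max y 0) ^ 2) (2 * max a 0) a := by
  rcases lt_trichotomy a 0 with h | h | h
  · have he : (fun y : ℝ => (max y 0) ^ 2) =ᶠ[nhds a] fun _ => (0 : ℝ) := by
      filter_upwards [Iio_mem_nhds h] with y hy
      simp [max_eq_right (Set.mem_Iio.mp hy).le]
    have := (hasDerivAt_const a (0 : ℝ)).congr_of_eventuallyEq he
    simpa [max_eq_right h.le] using this
  · subst h
    rw [hasDerivAt_iff_isLittleO]
    simp only [max_self, mul_zero, sub_zero, smul_zero]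
    norm_num
    rw [isLittleO_iff]
    intro c hc
    filter_upwards [Metric.ball_mem_nhds (0 : ℝ) hc] with y hy
    have hy' : |y| < c := by simpa [Real.dist_eq] using hy
    have h1 : |max y 0| ≤ |y| := by
      rcases le_or_gt y 0 with h | h
      · simp [max_eq_right h]
      · simp [max_eq_left h.le]
    calc ‖(max y 0) ^ 2‖ = |max y 0| * |max y 0| := by
          rw [sq]; simp [abs_mul]
      _ ≤ c * |y| := by
          exact mul_le_mul (le_of_lt (lt_of_le_of_lt h1 hy')) h1 (abs_nonneg _) hc.le
      _ = c * ‖y‖ := rfl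
  · have he : (fun y : ℝ => (max y 0) ^ 2) =ᶠ[nhds a] fun y => y ^ 2 := by
      filter_upwards [Ioi_mem_nhds h] with y hy
      simp [max_eq_left (Set.mem_Ioi.mp hy).le]
    have h2 : HasDerivAt (fun y : ℝ => y ^ 2) (2 * a) a := by
      simpa using hasDerivAt_pow 2 a
    have := h2.congr_of_eventuallyEq he
    simpa [max_eq_left h.le] using this

/-- Proposition 2: the gradient of the quadratic newsvendor loss
`E(w) = ½ (c_p (d - f w)⁺)² + ½ (c_h (f w - d)⁺)²`, which is differentiable
everywhere (including where `f w₀ = d`). -/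
theorem quadratic_newsvendor_loss_gradient {n : ℕ} (c_p c_h : ℝ)
    (d : ℝ) (f : (Fin n → ℝ) → ℝ) (w₀ : Fin n → ℝ) (hf : DifferentiableAt ℝ f w₀)
    (E : (Fin n → ℝ) → ℝ)
    (hE : ∀ w, E w = (1 / 2) * (c_p * max (d - f w) 0) ^ 2
        + (1 / 2) * (c_h * max (f w - d) 0) ^ 2) :
    DifferentiableAt ℝ E w₀ ∧
      (f w₀ < d → fderiv ℝ E w₀ = (-(c_p ^ 2 * (d - f w₀))) • fderiv ℝ f w₀) ∧
      (d < f w₀ → fderiv ℝ E w₀ = (c_h ^ 2 * (f w₀ - d)) • fderiv ℝ f w₀) ∧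
      (f w₀ = d → fderiv ℝ E w₀ = 0) := by
  have hEeq : E = (fun y : ℝ => (1 / 2) * c_p ^ 2 * (max (d - y) 0) ^ 2
      + (1 / 2) * c_h ^ 2 * (max (y - d) 0) ^ 2) ∘ f := by
    funext w
    simp only [Function.comp_apply, hE w, mul_pow]
    ring
  set g : ℝ → ℝ := fun y => (1 / 2) * c_p ^ 2 * (max (d - y) 0) ^ 2
      + (1 / 2) * c_h ^ 2 * (max (y - d) 0) ^ 2 with hg
  set g' : ℝ := -(c_p ^ 2 * max (d - f w₀) 0) + c_h ^ 2 * max (f w₀ - d) 0 with hg'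
  have hgd : HasDerivAt g g' (f w₀) := by
    have h1 : HasDerivAt (fun y : ℝ => d - y) (-1) (f w₀) := by
      simpa using (hasDerivAt_id (f w₀)).const_sub d
    have h2 : HasDerivAt (fun y : ℝ => y - d) 1 (f w₀) := by
      simpa using (hasDerivAt_id (f w₀)).sub_const d
    have hq1 := (sq_max_hasDerivAt (d - f w₀)).comp (f w₀) h1
    have hq2 := (sq_max_hasDerivAt (f w₀ - d)).comp (f w₀) h2
    have := ((hq1.const_mul ((1 : ℝ) / 2 * c_p ^ 2)).add
      (hq2.const_mul ((1 : ℝ) / 2 * c_h ^ 2)))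
    refine this.congr_deriv ?_
    rw [hg']; ring
  have hfF : HasFDerivAt f (fderiv ℝ f w₀) w₀ := hf.hasFDerivAt
  have hEF : HasFDerivAt E (g' • fderiv ℝ f w₀) w₀ := by
    rw [hEeq]
    exact hgd.comp_hasFDerivAt w₀ hfF
  refine ⟨hEF.differentiableAt, ?_, ?_, ?_⟩
  · intro h
    rw [hEF.fderiv, hg']
    have h1 : max (d - f w₀) 0 = d - f w₀ := max_eq_left (by linarith)
    have h2 : max (f w₀ - d) 0 = 0 := max_eq_right (by linarith)
    rw [h1, h2]; ring_nf
  · intro h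
    rw [hEF.fderiv, hg']
    have h1 : max (d - f w₀) 0 = 0 := max_eq_right (by linarith)
    have h2 : max (f w₀ - d) 0 = f w₀ - d := max_eq_left (by linarith)
    rw [h1, h2]; ring_nf
  · intro h
    rw [hEF.fderiv, hg', h]
    simp
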